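/- arXiv:0706.0356 — 4 statements merged into one kernel-verified Lean document; each statement's English description precedes it below -/
import Mathlib

section
/- Catalan's constant satisfies Ramanujan's formula G = (π/8)·log(2+√3) + (3/8)·∑_{k=0}^∞ 1/((2k+1)^2·C(2k,k)). -/
open Real Filter MeasureTheory intervalIntegral Set Topology

noncomputable def fcat (x : ℝ) : ℝ := ∑' k : ℕ, (-1)^k * x^(2*k+1) / (2*(k:ℝ)+1)^2

lemma summable_aux : Summable (fun k : ℕ => ((2*(k:ℝ)+1)^2)⁻¹) := by
  have h := (summable_one_div_nat_pow (p := 2)).2 one_lt_two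
  have h2 := h.comp_injective Nat.succ_injective
  refine h2.of_nonneg_of_le (fun k => by positivity) (fun k => ?_)
  simp only [Function.comp, one_div, Nat.succ_eq_add_one]
  rw [inv_le_inv₀ (by positivity) (by positivity)]
  push_cast
  nlinarith [Nat.cast_nonneg (α := ℝ) k]

lemma norm_fcat_term {x : ℝ} (hx : |x| ≤ 1) (k : ℕ) :
    ‖(-1:ℝ)^k * x^(2*k+1) / (2*(k:ℝ)+1)^2‖ ≤ ((2*(k:ℝ)+1)^2)⁻¹ := by
  rw [norm_div, norm_mul, norm_pow, norm_pow, norm_neg, norm_one, one_pow, one_mul]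
  rw [Real.norm_eq_abs, Real.norm_eq_abs, abs_of_nonneg (by positivity : (0:ℝ) ≤ (2*(k:ℝ)+1)^2)]
  rw [div_eq_mul_inv]
  have : |x|^(2*k+1) ≤ 1 := pow_le_one₀ (abs_nonneg x) hx
  nlinarith [inv_nonneg.2 (sq_nonneg (2*(k:ℝ)+1))]

lemma fcat_summable {x : ℝ} (hx : |x| ≤ 1) :
    Summable (fun k : ℕ => (-1:ℝ)^k * x^(2*k+1) / (2*(k:ℝ)+1)^2) :=
  summable_aux.of_norm_bounded (norm_fcat_term hx)

lemma fcat_continuousOn : ContinuousOn fcat (Icc (-1:ℝ) 1) := by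
  refine continuousOn_tsum (fun k => ?_) summable_aux (fun k x hx => ?_)
  · fun_prop
  · exact norm_fcat_term (abs_le.2 ⟨hx.1, hx.2⟩) k

lemma fcat_hasDerivAt {x : ℝ} (hx : |x| < 1) :
    HasDerivAt fcat (∑' k : ℕ, (-1)^k * x^(2*k) / (2*(k:ℝ)+1)) x := by
  set R : ℝ := (1+|x|)/2 with hR
  have hR0 : 0 ≤ R := by positivity
  have hxR : |x| < R := by simp only [hR]; linarith
  have hR1 : R < 1 := by simp only [hR]; linarith
  have hsum : Summable (fun k : ℕ => R^(2*k)) := by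
    have : Summable (fun k : ℕ => (R^2)^k) :=
      summable_geometric_of_lt_one (by positivity) (by nlinarith)
    simpa [pow_mul] using this
  suffices key : HasDerivAt (fun z : ℝ => ∑' k : ℕ, (-1:ℝ)^k * z^(2*k+1) / (2*(k:ℝ)+1)^2)
      (∑' k : ℕ, (-1:ℝ)^k * x^(2*k) / (2*(k:ℝ)+1)) x by exact key
  refine hasDerivAt_tsum_of_isPreconnected
    (g' := fun (k : ℕ) (y : ℝ) => (-1:ℝ)^k * y^(2*k) / (2*(k:ℝ)+1))
    hsum (isOpen_Ioo (a := -R) (b := R))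
    (convex_Ioo _ _).isPreconnected (fun k y hy => ?_) (fun k y hy => ?_)
    (show (0:ℝ) ∈ Ioo (-R) R from ⟨neg_lt_zero.mpr (by positivity), by positivity⟩)
    ?_ (show x ∈ Ioo (-R) R from abs_lt.1 hxR)
  · have h1 : HasDerivAt (fun y : ℝ => y^(2*k+1)) ((2*k+1 : ℕ) * y^(2*k)) y := hasDerivAt_pow _ _
    have h2 : HasDerivAt (fun x => (-1:ℝ)^k * x^(2*k+1) / (2*(k:ℝ)+1)^2) _ y := (h1.const_mul ((-1:ℝ)^k)).div_const ((2*(k:ℝ)+1)^2)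
    refine h2.congr_deriv ?_
    have : (2*(k:ℝ)+1) ≠ 0 := by positivity
    rw [div_eq_div_iff (by positivity) this]; push_cast
    ring
  · rw [norm_div, norm_mul, norm_pow, norm_pow, norm_neg, norm_one, one_pow, one_mul]
    have h1 : |y|^(2*k) ≤ R^(2*k) := by
      apply pow_le_pow_left₀ (abs_nonneg _)
      rw [mem_Ioo] at hy
      rw [abs_le]; constructor <;> linarith [hy.1, hy.2]
    have hk0 : (0:ℝ) ≤ (k:ℝ) := Nat.cast_nonneg k
    rw [Real.norm_eq_abs, Real.norm_eq_abs, abs_of_nonneg (by linarith : (0:ℝ) ≤ 2*(k:ℝ)+1)]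
    calc |y|^(2*k) / (2*(k:ℝ)+1) ≤ |y|^(2*k) := by
          rw [div_le_iff₀ (by linarith)]
          nlinarith [pow_nonneg (abs_nonneg y) (2*k)]
      _ ≤ R^(2*k) := h1
  · exact fcat_summable (by simp)


lemma tan_pi_div_twelve : tan (π/12) = 2 - Real.sqrt 3 := by
  have hπ := pi_pos
  have hcpos : 0 < Real.cos (π/12) :=
    Real.cos_pos_of_mem_Ioo ⟨by nlinarith, by nlinarith⟩
  have h6 : (π/6 : ℝ) = 2 * (π/12) := by ring
  have hs : Real.sin (π/6) = 2 * Real.sin (π/12) * Real.cos (π/12) := by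
    rw [h6, Real.sin_two_mul]
  have hc2 : Real.cos (π/6) = 2 * Real.cos (π/12)^2 - 1 := by rw [h6, Real.cos_two_mul]
  have h1 : Real.sin (π/6) = 1/2 := Real.sin_pi_div_six
  have h2 : Real.cos (π/6) = Real.sqrt 3 / 2 := Real.cos_pi_div_six
  have h3 : Real.sqrt 3 ^ 2 = 3 := Real.sq_sqrt (by norm_num)
  rw [Real.tan_eq_sin_div_cos, div_eq_iff hcpos.ne']
  nlinarith [mul_pos hcpos hcpos, sq_nonneg (Real.sin (π/12) - (2 - Real.sqrt 3) * Real.cos (π/12)), sq_nonneg (Real.sin (π/12) + (2 - Real.sqrt 3) * Real.cos (π/12))]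




lemma tsum_deriv_eq_arctan {x : ℝ} (hx : |x| < 1) (hx0 : x ≠ 0) :
    (∑' k : ℕ, (-1)^k * x^(2*k) / (2*(k:ℝ)+1)) = arctan x / x := by
  have h := (Real.hasSum_arctan (x := x) (by simpa using hx)).tsum_eq
  rw [eq_div_iff hx0, mul_comm, ← tsum_mul_left]
  rw [← h]
  congr 1
  ext k
  push_cast
  rw [pow_succ]
  ring

lemma fcat_zero : fcat 0 = 0 := by
  have : ∀ k : ℕ, (-1:ℝ)^k * (0:ℝ)^(2*k+1) / (2*(k:ℝ)+1)^2 = 0 := by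
    intro k; rw [zero_pow (by omega)]; ring
  simp only [fcat, this, tsum_zero]

lemma tan_lt_one {θ : ℝ} (h0 : 0 ≤ θ) (h : θ < π/4) : tan θ < 1 := by
  have := tan_lt_tan_of_nonneg_of_lt_pi_div_two h0 (by linarith [pi_pos]) h
  rwa [tan_pi_div_four] at this

lemma phi_deriv {θ : ℝ} (h0 : 0 < θ) (h : θ < π/4) :
    HasDerivAt (fun t => fcat (tan t) - t * log (tan t)) (-(log (tan θ))) θ := by
  have hπ := pi_pos
  have hθπ : θ < π/2 := by linarith
  have hcos : 0 < cos θ := cos_pos_of_mem_Ioo ⟨by linarith, hθπ⟩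
  have htanpos : 0 < tan θ := tan_pos_of_pos_of_lt_pi_div_two h0 hθπ
  have htan1 : tan θ < 1 := tan_lt_one h0.le h
  have habs : |tan θ| < 1 := abs_lt.2 ⟨by linarith, htan1⟩
  have h1 : HasDerivAt tan (1/cos θ^2) θ := hasDerivAt_tan hcos.ne'
  have h3 : HasDerivAt (fun t => fcat (tan t))
      ((∑' k : ℕ, (-1)^k * (tan θ)^(2*k) / (2*(k:ℝ)+1)) * (1/cos θ^2)) θ :=
    (fcat_hasDerivAt habs).comp θ h1
  have h4 : HasDerivAt (fun t => log (tan t)) ((tan θ)⁻¹ * (1/cos θ^2)) θ :=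
    (Real.hasDerivAt_log htanpos.ne').comp θ h1
  have h5 : HasDerivAt (fun t => t * log (tan t))
      (1 * log (tan θ) + θ * ((tan θ)⁻¹ * (1/cos θ^2))) θ :=
    (hasDerivAt_id θ).mul h4
  have h6 : HasDerivAt (fun t => fcat (tan t) - t * log (tan t)) _ θ := h3.sub h5
  convert h6 using 1
  rw [tsum_deriv_eq_arctan habs htanpos.ne', arctan_tan (by linarith) hθπ]
  field_simp
  ring

lemma continuousOn_log_tan {a b : ℝ} (ha : 0 < a) (hb : b < π/2) :
    ContinuousOn (fun t => log (tan t)) (Icc a b) := by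
  intro t ht
  have h0 : 0 < t := lt_of_lt_of_le ha ht.1
  have h2 : t < π/2 := lt_of_le_of_lt ht.2 hb
  have hcos : 0 < cos t := cos_pos_of_mem_Ioo ⟨by linarith [pi_pos], h2⟩
  have htan : 0 < tan t := tan_pos_of_pos_of_lt_pi_div_two h0 h2
  exact ((Real.continuousAt_log htan.ne').comp
    (Real.continuousAt_tan.2 hcos.ne')).continuousWithinAt

lemma log_tan_bounds {t : ℝ} (h0 : 0 < t) (h : t ≤ π/4) :
    log t ≤ log (tan t) ∧ log (tan t) ≤ log 2 + log t := by
  have hπ := pi_pos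
  have h2 : t < π/2 := by linarith
  have hlt : t < tan t := lt_tan h0 h2
  have hcos : cos (π/4) ≤ cos t := cos_le_cos_of_nonneg_of_le_pi h0.le (by linarith) (by linarith)
  have hcos2 : (1:ℝ)/2 ≤ cos t := by
    rw [cos_pi_div_four] at hcos
    nlinarith [Real.sq_sqrt (by norm_num : (2:ℝ) ≥ 0), Real.sqrt_nonneg 2]
  have htle : tan t ≤ 2 * t := by
    rw [tan_eq_sin_div_cos, div_le_iff₀ (by linarith)]
    nlinarith [Real.sin_le h0.le]
  constructor
  · exact (Real.log_le_log h0 hlt.le)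
  · calc log (tan t) ≤ log (2*t) := Real.log_le_log (by linarith) htle
      _ = log 2 + log t := Real.log_mul (by norm_num) h0.ne'
lemma intervalIntegrable_log_tan {b : ℝ} (hb0 : 0 < b) (hb : b ≤ π/4) :
    IntervalIntegrable (fun t => log (tan t)) volume 0 b := by
  have hπ := pi_pos
  have hneglog : IntervalIntegrable (fun t : ℝ => -log t) volume 0 b := by
    apply intervalIntegrable_deriv_of_nonneg (g := fun t => t - t * log t)
    · exact (continuous_id.sub continuous_mul_log).continuousOn
    · intro x hx
      rw [show (0:ℝ) ⊓ b = 0 from inf_eq_left.2 hb0.le,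
        show (0:ℝ) ⊔ b = b from sup_eq_right.2 hb0.le] at hx
      have hx0 : 0 < x := hx.1
      have hd : HasDerivAt (fun t => t - t * log t) _ x := (hasDerivAt_id x).sub (hasDerivAt_mul_log hx0.ne')
      simpa using hd
    · intro x hx
      rw [show (0:ℝ) ⊓ b = 0 from inf_eq_left.2 hb0.le,
        show (0:ℝ) ⊔ b = b from sup_eq_right.2 hb0.le] at hx
      have : x < 1 := by nlinarith [hx.2, Real.pi_lt_d2]
      simp only [neg_nonneg]
      exact Real.log_nonpos hx.1.le this.le
  have hg : IntervalIntegrable (fun t : ℝ => -log t + log 2) volume 0 b :=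
    hneglog.add intervalIntegrable_const
  rw [intervalIntegrable_iff_integrableOn_Ioc_of_le hb0.le] at hg ⊢
  apply Integrable.mono' hg
  · apply ContinuousOn.aestronglyMeasurable _ measurableSet_Ioc
    intro t ht
    have h2 : t < π/2 := by linarith [ht.2]
    have hcos : 0 < cos t := cos_pos_of_mem_Ioo ⟨by linarith [ht.1], h2⟩
    have htan : 0 < tan t := tan_pos_of_pos_of_lt_pi_div_two ht.1 h2
    exact ((Real.continuousAt_log htan.ne').comp
      (Real.continuousAt_tan.2 hcos.ne')).continuousWithinAt
  · filter_upwards [ae_restrict_mem measurableSet_Ioc] with t ht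
    obtain ⟨hl, hr⟩ := log_tan_bounds ht.1 (le_trans ht.2 hb)
    have hlt0 : log t ≤ 0 := Real.log_nonpos ht.1.le (by nlinarith [ht.2, Real.pi_lt_d2])
    rw [Real.norm_eq_abs, abs_le]
    constructor <;> nlinarith [Real.log_nonneg (by norm_num : (1:ℝ) ≤ 2)]




lemma key_formula {b : ℝ} (hb0 : 0 < b) (hb : b < π/4) :
    fcat (tan b) = b * log (tan b) - ∫ t in (0:ℝ)..b, log (tan t) := by
  have hπ := pi_pos
  have hbπ : b < π/2 := by linarith
  have main : ∀ a, a ∈ Ioc 0 b →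
      fcat (tan b) - b * log (tan b)
        = (fcat (tan a) - a * log (tan a)) + ∫ t in a..b, -(log (tan t)) := by
    intro a ha
    have hint : IntervalIntegrable (fun t => -(log (tan t))) volume a b := by
      apply IntervalIntegrable.neg
      apply ContinuousOn.intervalIntegrable
      rw [uIcc_of_le ha.2]
      exact continuousOn_log_tan ha.1 hbπ
    have h := integral_eq_sub_of_hasDerivAt (a := a) (b := b)
      (f := fun t => fcat (tan t) - t * log (tan t))
      (f' := fun t => -(log (tan t))) ?_ hint
    · rw [h]; ring
    · intro θ hθ
      rw [uIcc_of_le ha.2] at hθ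
      exact phi_deriv (lt_of_lt_of_le ha.1 hθ.1) (lt_of_le_of_lt hθ.2 hb)
  set l : Filter ℝ := 𝓝[>] (0:ℝ) with hl
  have hmem : Ioc (0:ℝ) b ∈ l := Ioc_mem_nhdsGT_of_mem ⟨le_rfl, hb0⟩
  have t1 : Tendsto (fun a => fcat (tan a)) l (𝓝 0) := by
    have htan : ContinuousAt tan 0 := continuousAt_tan.2 (by simp)
    have hf : ContinuousAt fcat (tan 0) := by
      rw [tan_zero]; exact (fcat_hasDerivAt (x := 0) (by norm_num)).continuousAt
    have := (hf.comp htan).tendsto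
    simp only [Function.comp_def, tan_zero, fcat_zero] at this
    exact this.mono_left nhdsWithin_le_nhds
  have hmullog : Tendsto (fun a : ℝ => a * log a) l (𝓝 0) := by
    have := (continuous_mul_log.tendsto 0).mono_left (nhdsWithin_le_nhds (s := Ioi (0:ℝ)))
    simpa using this
  have t2 : Tendsto (fun a => a * log (tan a)) l (𝓝 0) := by
    have hup : Tendsto (fun a : ℝ => a * log 2 + a * log a) l (𝓝 0) := by
      have h1 : Tendsto (fun a : ℝ => a * log 2) l (𝓝 0) := by
        have h0 : Tendsto (fun a : ℝ => a * log 2) (𝓝 0) (𝓝 (0 * log 2)) :=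
          (continuous_id.mul continuous_const).tendsto 0
        rw [zero_mul] at h0
        exact h0.mono_left nhdsWithin_le_nhds
      simpa using h1.add hmullog
    refine tendsto_of_tendsto_of_tendsto_of_le_of_le' hmullog hup ?_ ?_
    · filter_upwards [hmem] with a ha
      have h := (log_tan_bounds ha.1 (by linarith [ha.2])).1
      nlinarith [ha.1]
    · filter_upwards [hmem] with a ha
      have h := (log_tan_bounds ha.1 (by linarith [ha.2])).2
      nlinarith [ha.1]
  have t3 : Tendsto (fun a => ∫ t in a..b, -(log (tan t))) l
      (𝓝 (∫ t in (0:ℝ)..b, -(log (tan t)))) := by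
    have hint : IntegrableOn (fun t => -(log (tan t))) (uIcc 0 b) volume := by
      rw [uIcc_of_le hb0.le, ← intervalIntegrable_iff_integrableOn_Icc_of_le hb0.le]
      exact (intervalIntegrable_log_tan hb0 hb.le).neg
    have hcont := continuousOn_primitive_interval_left (a := 0) (b := b) hint
    have h0mem : (0:ℝ) ∈ uIcc 0 b := left_mem_uIcc
    have hw := (hcont 0 h0mem).tendsto
    refine hw.mono_left ?_
    rw [hl, uIcc_of_le hb0.le, ← nhdsWithin_Ioc_eq_nhdsGT hb0]
    exact nhdsWithin_mono _ Ioc_subset_Icc_self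
  have hcomb := (t1.sub t2).add t3
  rw [sub_zero, zero_add] at hcomb
  have hconst : Tendsto (fun _ : ℝ => fcat (tan b) - b * log (tan b)) l
      (𝓝 (∫ t in (0:ℝ)..b, -(log (tan t)))) := by
    refine hcomb.congr' ?_
    filter_upwards [hmem] with a ha
    exact (main a ha).symm
  have := tendsto_nhds_unique hconst tendsto_const_nhds
  rw [intervalIntegral.integral_neg] at this
  linarith

lemma E1 : fcat 1 = - ∫ t in (0:ℝ)..(π/4), log (tan t) := by
  have hπ := pi_pos
  set l : Filter ℝ := 𝓝[<] (π/4) with hl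
  have hmem : Ioo (0:ℝ) (π/4) ∈ l := by
    rw [hl, ← nhdsWithin_Ioo_eq_nhdsLT (by linarith : (0:ℝ) < π/4)]
    exact self_mem_nhdsWithin
  have htancont : ContinuousAt tan (π/4) := by
    apply continuousAt_tan.2
    rw [cos_pi_div_four]
    positivity
  have htan : Tendsto tan l (𝓝 1) := by
    have := htancont.tendsto
    rw [tan_pi_div_four] at this
    exact this.mono_left nhdsWithin_le_nhds
  have t1 : Tendsto (fun b => fcat (tan b)) l (𝓝 (fcat 1)) := by
    have houter : ContinuousWithinAt fcat (Icc (-1:ℝ) 1) 1 :=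
      fcat_continuousOn 1 (by norm_num)
    have hinner : Tendsto tan l (𝓝[Icc (-1:ℝ) 1] 1) := by
      refine tendsto_nhdsWithin_of_tendsto_nhds_of_eventually_within _ htan ?_
      filter_upwards [hmem] with b hb
      have h1 : 0 < tan b := tan_pos_of_pos_of_lt_pi_div_two hb.1 (by linarith [hb.2])
      have h2 : tan b < 1 := tan_lt_one hb.1.le hb.2
      exact ⟨by linarith, h2.le⟩
    exact houter.tendsto.comp hinner
  have t2 : Tendsto (fun b => b * log (tan b)) l (𝓝 0) := by
    have : ContinuousAt (fun b => b * log (tan b)) (π/4) := by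
      apply continuousAt_id.mul
      exact (Real.continuousAt_log (by rw [tan_pi_div_four]; norm_num)).comp htancont
    have h := this.tendsto
    simp only [tan_pi_div_four, Real.log_one, mul_zero] at h
    exact h.mono_left nhdsWithin_le_nhds
  have t3 : Tendsto (fun b => ∫ t in (0:ℝ)..b, log (tan t)) l
      (𝓝 (∫ t in (0:ℝ)..(π/4), log (tan t))) := by
    have hcont := continuousOn_primitive_interval'
      (intervalIntegrable_log_tan (by linarith) le_rfl) (left_mem_uIcc (a := (0:ℝ)) (b := π/4))
    have hw := (hcont (π/4) right_mem_uIcc).tendsto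
    refine hw.mono_left ?_
    rw [hl, uIcc_of_le (by linarith : (0:ℝ) ≤ π/4),
      ← nhdsWithin_Ioo_eq_nhdsLT (by linarith : (0:ℝ) < π/4)]
    exact nhdsWithin_mono _ Ioo_subset_Icc_self
  have hcomb := t2.sub t3
  rw [zero_sub] at hcomb
  have : Tendsto (fun b => fcat (tan b)) l (𝓝 (-∫ t in (0:ℝ)..(π/4), log (tan t))) := by
    refine hcomb.congr' ?_
    filter_upwards [hmem] with b hb
    exact (key_formula hb.1 hb.2).symm
  exact tendsto_nhds_unique t1 this



lemma tan_triple {t : ℝ} (h0 : 0 < t) (h : t ≤ π/12) :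
    tan (3*t) = tan t * (tan (π/3 - t) * tan (π/3 + t)) := by
  have hπ := pi_pos
  have hc1 : 0 < cos t := cos_pos_of_mem_Ioo ⟨by linarith, by linarith⟩
  have hc2 : 0 < cos (π/3 - t) := cos_pos_of_mem_Ioo ⟨by linarith, by linarith⟩
  have hc3 : 0 < cos (π/3 + t) := cos_pos_of_mem_Ioo ⟨by linarith, by linarith⟩
  have hc4 : 0 < cos (3*t) := cos_pos_of_mem_Ioo ⟨by linarith, by linarith⟩
  have h3 : Real.sqrt 3 ^ 2 = 3 := Real.sq_sqrt (by norm_num)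
  have hsc := sin_sq_add_cos_sq t
  have h1 : sin (3*t) = 4 * sin t * (sin (π/3 - t) * sin (π/3 + t)) := by
    rw [sin_three_mul, sin_sub, sin_add, sin_pi_div_three, cos_pi_div_three]
    linear_combination (-3*sin t) * hsc + (-(sin t)*(cos t)^2) * h3
  have h2 : cos (3*t) = 4 * cos t * (cos (π/3 - t) * cos (π/3 + t)) := by
    rw [cos_three_mul, cos_sub, cos_add, sin_pi_div_three, cos_pi_div_three]
    linear_combination (3*cos t) * hsc + ((cos t)*(sin t)^2) * h3
  rw [tan_eq_sin_div_cos, tan_eq_sin_div_cos, tan_eq_sin_div_cos, tan_eq_sin_div_cos,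
    h1, h2]
  field_simp

lemma log_tan_triple {t : ℝ} (h0 : 0 < t) (h : t ≤ π/12) :
    log (tan (3*t)) = log (tan t) + (log (tan (π/3 - t)) + log (tan (π/3 + t))) := by
  have hπ := pi_pos
  have ht1 : 0 < tan t := tan_pos_of_pos_of_lt_pi_div_two h0 (by linarith)
  have ht2 : 0 < tan (π/3 - t) :=
    tan_pos_of_pos_of_lt_pi_div_two (by linarith) (by linarith)
  have ht3 : 0 < tan (π/3 + t) :=
    tan_pos_of_pos_of_lt_pi_div_two (by linarith) (by linarith)
  rw [tan_triple h0 h, Real.log_mul ht1.ne' (by positivity), Real.log_mul ht2.ne' ht3.ne']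

lemma log_tan_reflection {a b : ℝ} :
    ∫ x in (π/2 - b)..(π/2 - a), log (tan x) = - ∫ x in a..b, log (tan x) := by
  have h := integral_comp_sub_left (a := a) (b := b) (fun x => log (tan x)) (π/2)
  rw [← h, ← intervalIntegral.integral_neg]
  apply intervalIntegral.integral_congr
  intro x _
  simp only [tan_pi_div_two_sub, Real.log_inv]

lemma E3 : ∫ t in (0:ℝ)..(π/12), log (tan t)
    = 2/3 * ∫ t in (0:ℝ)..(π/4), log (tan t) := by
  have hπ := pi_pos
  -- integrability facts
  have hi1 : IntervalIntegrable (fun t => log (tan t)) volume 0 (π/12) :=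
    intervalIntegrable_log_tan (by linarith) (by linarith)
  have hi2 : IntervalIntegrable (fun t => log (tan (π/3 - t))) volume 0 (π/12) := by
    apply ContinuousOn.intervalIntegrable
    rw [uIcc_of_le (by linarith)]
    have hcont := continuousOn_log_tan (a := π/4) (b := π/3) (by linarith) (by linarith)
    have : ContinuousOn (fun t : ℝ => π/3 - t) (Icc 0 (π/12)) :=
      (continuous_const.sub continuous_id).continuousOn
    refine ContinuousOn.comp hcont this ?_
    intro x hx
    constructor <;> [linarith [hx.2]; linarith [hx.1]]
  have hi3 : IntervalIntegrable (fun t => log (tan (π/3 + t))) volume 0 (π/12) := by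
    apply ContinuousOn.intervalIntegrable
    rw [uIcc_of_le (by linarith)]
    have hcont := continuousOn_log_tan (a := π/3) (b := 5*π/12) (by linarith) (by linarith)
    have : ContinuousOn (fun t : ℝ => π/3 + t) (Icc 0 (π/12)) :=
      (continuous_const.add continuous_id).continuousOn
    refine ContinuousOn.comp hcont this ?_
    intro x hx
    constructor <;> [linarith [hx.1]; linarith [hx.2]]
  -- step a : lhs of triple identity
  have ha : (∫ t in (0:ℝ)..(π/12), log (tan (3*t)))
      = 1/3 * ∫ t in (0:ℝ)..(π/4), log (tan t) := by
    have := integral_comp_mul_left (a := (0:ℝ)) (b := π/12)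
      (fun u => log (tan u)) (c := 3) (by norm_num)
    rw [this, show (3:ℝ)*(π/12) = π/4 by ring, show (3:ℝ)*0 = 0 by ring, smul_eq_mul]
    ring
  -- step b : pointwise identity under the integral
  have hb : (∫ t in (0:ℝ)..(π/12), log (tan (3*t)))
      = ∫ t in (0:ℝ)..(π/12), (log (tan t) + (log (tan (π/3 - t)) + log (tan (π/3 + t)))) := by
    apply intervalIntegral.integral_congr_ae
    filter_upwards with x hx
    rw [uIoc_of_le (by linarith : (0:ℝ) ≤ π/12)] at hx
    exact log_tan_triple hx.1 hx.2
  have hsplit : (∫ t in (0:ℝ)..(π/12), (log (tan t) + (log (tan (π/3 - t)) + log (tan (π/3 + t)))))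
      = (∫ t in (0:ℝ)..(π/12), log (tan t)) + ((∫ t in (0:ℝ)..(π/12), log (tan (π/3 - t)))
        + ∫ t in (0:ℝ)..(π/12), log (tan (π/3 + t))) := by
    rw [intervalIntegral.integral_add hi1 (hi2.add hi3), intervalIntegral.integral_add hi2 hi3]
  have hI2 : (∫ t in (0:ℝ)..(π/12), log (tan (π/3 - t)))
      = - ∫ x in (π/6)..(π/4), log (tan x) := by
    have h := integral_comp_sub_left (a := (0:ℝ)) (b := π/12) (fun u => log (tan u)) (π/3)
    rw [h, show π/3 - π/12 = π/4 by ring, show π/3 - 0 = π/3 by ring]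
    have := log_tan_reflection (a := π/6) (b := π/4)
    rw [show π/2 - π/4 = π/4 by ring, show π/2 - π/6 = π/3 by ring] at this
    exact this
  have hI3 : (∫ t in (0:ℝ)..(π/12), log (tan (π/3 + t)))
      = - ∫ x in (π/12)..(π/6), log (tan x) := by
    have h := integral_comp_add_left (a := (0:ℝ)) (b := π/12) (fun u => log (tan u)) (π/3)
    rw [h, show π/3 + π/12 = 5*π/12 by ring, show π/3 + 0 = π/3 by ring]
    have := log_tan_reflection (a := π/12) (b := π/6)
    rw [show π/2 - π/6 = π/3 by ring, show π/2 - π/12 = 5*π/12 by ring] at this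
    exact this
  -- adjacency
  have hj1 : IntervalIntegrable (fun t => log (tan t)) volume (π/12) (π/6) := by
    apply ContinuousOn.intervalIntegrable
    rw [uIcc_of_le (by linarith)]
    exact continuousOn_log_tan (by linarith) (by linarith)
  have hj2 : IntervalIntegrable (fun t => log (tan t)) volume (π/6) (π/4) := by
    apply ContinuousOn.intervalIntegrable
    rw [uIcc_of_le (by linarith)]
    exact continuousOn_log_tan (by linarith) (by linarith)
  have hadj1 : (∫ t in (π/12)..(π/6), log (tan t)) + (∫ t in (π/6)..(π/4), log (tan t))
      = ∫ t in (π/12)..(π/4), log (tan t) :=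
    integral_add_adjacent_intervals hj1 hj2
  have hadj2 : (∫ t in (0:ℝ)..(π/12), log (tan t)) + (∫ t in (π/12)..(π/4), log (tan t))
      = ∫ t in (0:ℝ)..(π/4), log (tan t) :=
    integral_add_adjacent_intervals hi1 (hj1.trans hj2)
  rw [hb, hsplit, hI2, hI3] at ha
  linarith


lemma integral_cos_odd (k : ℕ) :
    (∫ θ in (0:ℝ)..(π/2), cos θ ^ (2*k+1))
      = 4^k * ((k.factorial : ℝ))^2 / ((2*k+1).factorial : ℝ) := by
  induction k with
  | zero => simp
  | succ k ih =>
    have h := integral_cos_pow (a := 0) (b := π/2) (n := 2*k+1)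
    rw [show (2*k+1)+2 = 2*(k+1)+1 by ring] at h
    have hnat : (2*(k+1)+1).factorial = (2*k+3) * ((2*k+2) * (2*k+1).factorial) := by
      rw [show 2*(k+1)+1 = (2*k+2)+1 by ring, Nat.factorial_succ,
        show 2*k+2 = (2*k+1)+1 by ring, Nat.factorial_succ]
    have hne : ((2*k+1).factorial : ℝ) ≠ 0 := by positivity
    rw [h, cos_pi_div_two, sin_zero, ih, hnat]
    push_cast [Nat.factorial_succ]
    rw [zero_pow (by omega : 2*k+1+1 ≠ 0)]
    field_simp
    ring

lemma term_eq (k : ℕ) :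
    (∫ θ in (0:ℝ)..(π/2), 2 * (1/(2*(k:ℝ)+1)) * (cos θ / 2)^(2*k+1))
      = 1 / ((2*(k:ℝ)+1)^2 * ((2*k).choose k : ℝ)) := by
  have hrw : ∀ θ:ℝ, 2 * (1/(2*(k:ℝ)+1)) * (cos θ / 2)^(2*k+1)
      = (2 * (1/(2*(k:ℝ)+1)) * (1/2)^(2*k+1)) * cos θ^(2*k+1) := by
    intro θ; simp only [div_pow, one_pow]; ring
  simp_rw [hrw]
  rw [intervalIntegral.integral_const_mul, integral_cos_odd]
  have hch : (((2*k).choose k : ℕ) : ℝ) * (k.factorial:ℝ) * (k.factorial:ℝ)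
      = ((2*k).factorial : ℝ) := by
    have := Nat.choose_mul_factorial_mul_factorial (show k ≤ 2*k by omega)
    rw [show 2*k - k = k by omega] at this
    exact_mod_cast congrArg (Nat.cast (R := ℝ)) this
  have hfac : ((2*k+1).factorial : ℝ) = (2*(k:ℝ)+1) * ((2*k).factorial : ℝ) := by
    rw [Nat.factorial_succ]; push_cast; ring
  have h2 : (4:ℝ)^k = 2^(2*k) := by rw [pow_mul]; norm_num
  have hkne : (2*(k:ℝ)+1) ≠ 0 := by positivity
  have hfne : (k.factorial : ℝ) ≠ 0 := by positivity
  have hcne : (((2*k).choose k : ℕ) : ℝ) ≠ 0 := by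
    have := Nat.choose_pos (show k ≤ 2*k by omega)
    positivity
  rw [hfac, ← hch, h2]
  rw [show (2*k+1) = 2*k+1 from rfl]
  field_simp
  ring_nf
  rw [← mul_pow]; norm_num

lemma log_ratio_eq (θ : ℝ) :
    Real.log (1 + cos θ/2) - Real.log (1 - cos θ/2)
      = Real.log (2 + cos θ) - Real.log (2 - cos θ) := by
  have hc1 := Real.neg_one_le_cos θ
  have hc2 := Real.cos_le_one θ
  have e1 : (1 : ℝ) + cos θ/2 = (2 + cos θ)/2 := by ring
  have e2 : (1 : ℝ) - cos θ/2 = (2 - cos θ)/2 := by ring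
  rw [e1, e2, Real.log_div (by linarith) (by norm_num),
    Real.log_div (by linarith) (by norm_num)]
  ring

lemma S_eq : (∑' k : ℕ, 1 / ((2*(k:ℝ)+1)^2 * ((2*k).choose k : ℝ)))
    = ∫ θ in (0:ℝ)..(π/2), (Real.log (2 + cos θ) - Real.log (2 - cos θ)) := by
  set F : ℕ → C(ℝ, ℝ) := fun k =>
    ⟨fun θ => 2 * (1/(2*(k:ℝ)+1)) * (cos θ / 2)^(2*k+1), by fun_prop⟩ with hF
  have hbound : ∀ (k : ℕ) (θ : ℝ), ‖F k θ‖ ≤ (1/4 : ℝ)^k := by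
    intro k θ
    simp only [hF, ContinuousMap.coe_mk]
    rw [Real.norm_eq_abs, abs_mul, abs_mul, abs_pow]
    have h1 : |cos θ / 2| ≤ 1/2 := by
      rw [abs_div]
      have := abs_cos_le_one θ
      rw [abs_two]
      linarith
    have h2 : |cos θ / 2|^(2*k+1) ≤ (1/2)^(2*k+1) :=
      pow_le_pow_left₀ (abs_nonneg _) h1 _
    have h3 : |1/(2*(k:ℝ)+1)| ≤ 1 := by
      rw [abs_of_nonneg (by positivity)]
      rw [div_le_one (by positivity)]
      have : (0:ℝ) ≤ (k:ℝ) := Nat.cast_nonneg k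
      linarith
    have h4 : ((1:ℝ)/2)^(2*k+1) ≤ (1/2)^(2*k) := by
      apply pow_le_pow_of_le_one (by norm_num) (by norm_num)
      omega
    calc |2| * |1/(2*(k:ℝ)+1)| * |cos θ / 2|^(2*k+1)
        ≤ 2 * 1 * (1/2)^(2*k+1) := by
          apply mul_le_mul _ h2 (by positivity) (by positivity)
          rw [abs_two]
          nlinarith [abs_nonneg (1/(2*(k:ℝ)+1))]
      _ ≤ 2 * (1/2)^(2*k+1) := by rw [mul_one]
      _ = (1/2)^(2*k) := by rw [pow_succ]; ring
      _ = (1/4)^k := by rw [pow_mul]; norm_num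
  have hsum : Summable fun k : ℕ =>
      ‖(F k).restrict (⟨uIcc (0:ℝ) (π/2), isCompact_uIcc⟩ : TopologicalSpace.Compacts ℝ)‖ := by
    apply Summable.of_nonneg_of_le (fun k => norm_nonneg _) (fun k => ?_)
      (summable_geometric_of_lt_one (by norm_num) (by norm_num : (1/4:ℝ) < 1))
    rw [ContinuousMap.norm_le _ (by positivity)]
    intro x
    exact hbound k x
  have hswap := tsum_intervalIntegral_eq_of_summable_norm (a := 0) (b := π/2) hsum
  have hL : ∀ k : ℕ, (∫ θ in (0:ℝ)..(π/2), F k θ)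
      = 1 / ((2*(k:ℝ)+1)^2 * ((2*k).choose k : ℝ)) := fun k => term_eq k
  have hR : ∀ θ : ℝ, (∑' k : ℕ, F k θ)
      = Real.log (2 + cos θ) - Real.log (2 - cos θ) := by
    intro θ
    have h1 : |cos θ / 2| < 1 := by
      rw [abs_div, abs_two]
      have := abs_cos_le_one θ
      linarith
    have := (hasSum_log_sub_log_of_abs_lt_one h1).tsum_eq
    simp only [hF, ContinuousMap.coe_mk]
    rw [this, log_ratio_eq]
  calc (∑' k : ℕ, 1 / ((2*(k:ℝ)+1)^2 * ((2*k).choose k : ℝ)))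
      = ∑' k : ℕ, (∫ θ in (0:ℝ)..(π/2), F k θ) := by
        exact (tsum_congr hL).symm
    _ = ∫ θ in (0:ℝ)..(π/2), (∑' k : ℕ, F k θ) := hswap
    _ = ∫ θ in (0:ℝ)..(π/2), (Real.log (2 + cos θ) - Real.log (2 - cos θ)) := by
        apply intervalIntegral.integral_congr
        intro θ _
        exact hR θ



lemma sqrt3_sq : Real.sqrt 3 ^ 2 = 3 := Real.sq_sqrt (by norm_num)
lemma sqrt3_lt_two : Real.sqrt 3 < 2 := by
  nlinarith [sqrt3_sq, Real.sqrt_nonneg 3]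
lemma one_lt_sqrt3 : 1 < Real.sqrt 3 := by
  nlinarith [sqrt3_sq, Real.sqrt_nonneg 3]

lemma aux_hasSum (θ s : ℝ) (hs : |s| < 1) :
    HasSum (fun n : ℕ => s^n * Real.cos (n*θ) / n)
      (- Real.log (‖1 - (s:ℂ) * Complex.exp (θ * Complex.I)‖)) := by
  set w : ℂ := (s:ℂ) * Complex.exp (θ * Complex.I) with hw
  have hnorm : ‖w‖ < 1 := by
    rw [hw, norm_mul, Complex.norm_real, Complex.norm_exp_ofReal_mul_I,
      mul_one, Real.norm_eq_abs]
    exact hs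
  have h := Complex.hasSum_taylorSeries_neg_log hnorm
  have hre := Complex.hasSum_re h
  have hterm : ∀ n : ℕ, (w^n / n).re = s^n * Real.cos (n*θ) / n := by
    intro n
    have hzn : w^n / n = ((s^n / n : ℝ) : ℂ) * Complex.exp ((n*θ : ℝ) * Complex.I) := by
      rw [hw, mul_pow, ← Complex.exp_nat_mul]
      push_cast
      ring
    rw [hzn, Complex.re_ofReal_mul, Complex.exp_ofReal_mul_I_re]
    ring
  have hval : (-Complex.log (1 - w)).re
      = - Real.log (‖1 - w‖) := by
    rw [Complex.neg_re, Complex.log_re]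
  rw [hval] at hre
  exact hre.congr_fun (fun n => (hterm n).symm)

lemma aux_abs (θ s : ℝ) :
    (‖1 - (s:ℂ) * Complex.exp (θ * Complex.I)‖)^2
      = 1 - 2*s*Real.cos θ + s^2 := by
  rw [Complex.sq_norm, Complex.normSq_apply]
  have hre : (1 - (s:ℂ) * Complex.exp (θ * Complex.I)).re = 1 - s * Real.cos θ := by
    rw [Complex.sub_re, Complex.one_re, Complex.re_ofReal_mul, Complex.exp_ofReal_mul_I_re]
  have him : (1 - (s:ℂ) * Complex.exp (θ * Complex.I)).im = - (s * Real.sin θ) := by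
    rw [Complex.sub_im, Complex.one_im, Complex.im_ofReal_mul, Complex.exp_ofReal_mul_I_im]
    ring
  rw [hre, him]
  have := Real.sin_sq_add_cos_sq θ
  nlinarith [this]

lemma two_log_abs (θ s : ℝ) (hpos : 0 < 1 - 2*s*Real.cos θ + s^2) :
    2 * Real.log (‖1 - (s:ℂ) * Complex.exp (θ * Complex.I)‖)
      = Real.log (1 - 2*s*Real.cos θ + s^2) := by
  rw [← aux_abs θ s, Real.log_pow]
  norm_num

lemma fourier_pointwise (θ : ℝ) :
    HasSum (fun k : ℕ => 4 * (2-Real.sqrt 3)^(2*k+1) * Real.cos ((2*(k:ℝ)+1)*θ) / (2*(k:ℝ)+1))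
      (Real.log (2 + Real.cos θ) - Real.log (2 - Real.cos θ)) := by
  set r : ℝ := 2 - Real.sqrt 3 with hrdef
  have h3 := sqrt3_sq
  have hr0 : 0 < r := by rw [hrdef]; linarith [sqrt3_lt_two]
  have hr1 : r < 1 := by rw [hrdef]; linarith [one_lt_sqrt3]
  have habs : |r| < 1 := abs_lt.2 ⟨by linarith, hr1⟩
  have habs' : |(-r)| < 1 := by rwa [abs_neg]
  have hcos1 := Real.neg_one_le_cos θ
  have hcos2 := Real.cos_le_one θ
  have hp1 : (0:ℝ) < 1 - 2*r*Real.cos θ + r^2 := by nlinarith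
  have hp2 : (0:ℝ) < 1 - 2*(-r)*Real.cos θ + (-r)^2 := by nlinarith
  have e1 : 1 - 2*r*Real.cos θ + r^2 = 2*r*(2 - Real.cos θ) := by
    rw [hrdef]; linear_combination h3
  have e2 : 1 - 2*(-r)*Real.cos θ + (-r)^2 = 2*r*(2 + Real.cos θ) := by
    rw [hrdef]; linear_combination h3
  -- sum of difference
  have h1 := aux_hasSum θ r habs
  have h2 := aux_hasSum θ (-r) habs'
  have hsub := (h1.sub h2).mul_left 2
  -- identify the value
  have hv1 := two_log_abs θ r hp1
  have hv2 := two_log_abs θ (-r) hp2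
  have hlogr : Real.log (1 - 2*r*Real.cos θ + r^2)
      = Real.log (2*r) + Real.log (2 - Real.cos θ) := by
    rw [e1, Real.log_mul (by positivity) (by linarith)]
  have hlogr2 : Real.log (1 - 2*(-r)*Real.cos θ + (-r)^2)
      = Real.log (2*r) + Real.log (2 + Real.cos θ) := by
    rw [e2, Real.log_mul (by positivity) (by linarith)]
  have hval : 2 * (- Real.log (‖1 - (r:ℂ) * Complex.exp (θ * Complex.I)‖)
      - (- Real.log (‖1 - ((-r : ℝ):ℂ) * Complex.exp (θ * Complex.I)‖)))
      = Real.log (2 + Real.cos θ) - Real.log (2 - Real.cos θ) := by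
    have hA : 2 * Real.log (‖1 - (r:ℂ) * Complex.exp (θ * Complex.I)‖)
        = Real.log (2*r) + Real.log (2 - Real.cos θ) := by rw [hv1, hlogr]
    have hB : 2 * Real.log (‖1 - ((-r : ℝ):ℂ) * Complex.exp (θ * Complex.I)‖)
        = Real.log (2*r) + Real.log (2 + Real.cos θ) := by rw [hv2, hlogr2]
    linarith
  rw [hval] at hsub
  -- now extract odd terms
  have hinj : Function.Injective (fun k : ℕ => 2*k+1) := fun a b h => by dsimp only at h; omega
  have hzero : ∀ n : ℕ, n ∉ Set.range (fun k : ℕ => 2*k+1) →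
      2 * (r^n * Real.cos (n*θ) / n - (-r)^n * Real.cos (n*θ) / n) = 0 := by
    intro n hn
    have heven : Even n := by
      rcases Nat.even_or_odd n with h | h
      · exact h
      · exfalso; obtain ⟨m, hm⟩ := h; exact hn ⟨m, by dsimp only; omega⟩
    rw [heven.neg_pow]
    ring
  have := (Function.Injective.hasSum_iff hinj hzero).2 hsub
  refine this.congr_fun ?_
  intro k
  simp only [Function.comp]
  have hodd : Odd (2*k+1) := ⟨k, by ring⟩
  rw [hodd.neg_pow]
  push_cast
  ring

lemma sin_odd_pi_div_two (k : ℕ) : Real.sin ((2*(k:ℝ)+1)*(π/2)) = (-1)^k := by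
  induction k with
  | zero => norm_num
  | succ k ih =>
    have : (2*((k:ℝ)+1)+1)*(π/2) = (2*(k:ℝ)+1)*(π/2) + π := by ring
    push_cast
    rw [this, Real.sin_add_pi]
    push_cast at ih
    rw [ih]
    ring

lemma integral_cos_mul (k : ℕ) :
    (∫ θ in (0:ℝ)..(π/2), Real.cos ((2*(k:ℝ)+1)*θ)) = (-1)^k / (2*(k:ℝ)+1) := by
  have hc : (2*(k:ℝ)+1) ≠ 0 := by positivity
  have h := integral_comp_mul_left (a := (0:ℝ)) (b := π/2)
    (fun u => Real.cos u) (c := 2*(k:ℝ)+1) hc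
  rw [h, mul_zero, integral_cos, Real.sin_zero, sub_zero, smul_eq_mul,
    sin_odd_pi_div_two]
  field_simp

lemma I_eq : (∫ θ in (0:ℝ)..(π/2), (Real.log (2 + Real.cos θ) - Real.log (2 - Real.cos θ)))
    = 4 * fcat (2 - Real.sqrt 3) := by
  set r : ℝ := 2 - Real.sqrt 3 with hrdef
  have hr0 : 0 < r := by rw [hrdef]; linarith [sqrt3_lt_two]
  have hr1 : r < 1 := by rw [hrdef]; linarith [one_lt_sqrt3]
  set G : ℕ → C(ℝ, ℝ) := fun k =>
    ⟨fun θ => 4 * r^(2*k+1) * Real.cos ((2*(k:ℝ)+1)*θ) / (2*(k:ℝ)+1), by fun_prop⟩ with hG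
  have hbound : ∀ (k : ℕ) (θ : ℝ), ‖G k θ‖ ≤ (4*r) * (r^2)^k := by
    intro k θ
    simp only [hG, ContinuousMap.coe_mk]
    have hden : (1:ℝ) ≤ 2*(k:ℝ)+1 := by
      have : (0:ℝ) ≤ (k:ℝ) := Nat.cast_nonneg k
      linarith
    have hcos : |Real.cos ((2*(k:ℝ)+1)*θ)| ≤ 1 := Real.abs_cos_le_one _
    have hrp : (0:ℝ) < r^(2*k+1) := by positivity
    rw [Real.norm_eq_abs, abs_div, abs_mul, abs_mul]
    rw [abs_of_nonneg (by norm_num : (0:ℝ) ≤ (4:ℝ)), abs_of_nonneg hrp.le,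
      abs_of_nonneg (by linarith : (0:ℝ) ≤ 2*(k:ℝ)+1)]
    have h1 : 4 * r^(2*k+1) * |Real.cos ((2*(k:ℝ)+1)*θ)| ≤ 4 * r^(2*k+1) := by
      nlinarith
    have h2 : 4 * r^(2*k+1) * |Real.cos ((2*(k:ℝ)+1)*θ)| / (2*(k:ℝ)+1)
        ≤ 4 * r^(2*k+1) := by
      rw [div_le_iff₀ (by linarith)]
      nlinarith [abs_nonneg (Real.cos ((2*(k:ℝ)+1)*θ))]
    calc 4 * r^(2*k+1) * |Real.cos ((2*(k:ℝ)+1)*θ)| / (2*(k:ℝ)+1)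
        ≤ 4 * r^(2*k+1) := h2
      _ = (4*r) * (r^2)^k := by rw [← pow_mul, pow_succ, pow_mul]; ring
  have hsum : Summable fun k : ℕ =>
      ‖(G k).restrict (⟨uIcc (0:ℝ) (π/2), isCompact_uIcc⟩ : TopologicalSpace.Compacts ℝ)‖ := by
    have hgeo : Summable (fun k : ℕ => (4*r) * (r^2)^k) :=
      (summable_geometric_of_lt_one (by positivity) (by nlinarith)).mul_left _
    apply Summable.of_nonneg_of_le (fun k => norm_nonneg _) (fun k => ?_) hgeo
    rw [ContinuousMap.norm_le _ (by positivity)]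
    intro x
    exact hbound k x
  have hswap := tsum_intervalIntegral_eq_of_summable_norm (a := 0) (b := π/2) hsum
  have hL : ∀ k : ℕ, (∫ θ in (0:ℝ)..(π/2), G k θ)
      = 4 * ((-1)^k * r^(2*k+1) / (2*(k:ℝ)+1)^2) := by
    intro k
    simp only [hG, ContinuousMap.coe_mk]
    have hrw : ∀ θ:ℝ, 4 * r^(2*k+1) * Real.cos ((2*(k:ℝ)+1)*θ) / (2*(k:ℝ)+1)
        = (4 * r^(2*k+1) / (2*(k:ℝ)+1)) * Real.cos ((2*(k:ℝ)+1)*θ) := by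
      intro θ; ring
    simp_rw [hrw]
    rw [intervalIntegral.integral_const_mul, integral_cos_mul]
    have : (2*(k:ℝ)+1) ≠ 0 := by positivity
    field_simp
  calc (∫ θ in (0:ℝ)..(π/2), (Real.log (2 + Real.cos θ) - Real.log (2 - Real.cos θ)))
      = ∫ θ in (0:ℝ)..(π/2), (∑' k : ℕ, G k θ) := by
        apply intervalIntegral.integral_congr
        intro θ _
        exact ((fourier_pointwise θ).tsum_eq).symm
    _ = ∑' k : ℕ, (∫ θ in (0:ℝ)..(π/2), G k θ) := hswap.symm
    _ = ∑' k : ℕ, 4 * ((-1)^k * r^(2*k+1) / (2*(k:ℝ)+1)^2) := tsum_congr hL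
    _ = 4 * fcat r := by rw [tsum_mul_left]; rfl


theorem stmt12 :
    (∑' k : ℕ, (-1 : ℝ) ^ k / (2 * k + 1) ^ 2) =
      (π / 8) * Real.log (2 + Real.sqrt 3) +
        (3 / 8) * ∑' k : ℕ,
          1 / ((2 * k + 1) ^ 2 * (Nat.choose (2 * k) k : ℝ)) := by
  have hπ := pi_pos
  have h3 := sqrt3_sq
  have hgoal1 : (∑' k : ℕ, (-1 : ℝ) ^ k / (2 * (k:ℝ) + 1) ^ 2) = fcat 1 := by
    rw [show fcat 1 = ∑' k : ℕ, (-1:ℝ)^k * (1:ℝ)^(2*k+1) / (2*(k:ℝ)+1)^2 from rfl]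
    apply tsum_congr
    intro k
    rw [one_pow, mul_one]
  have hS := S_eq
  have hI := I_eq
  have hkey := key_formula (b := π/12) (by linarith) (by linarith)
  rw [tan_pi_div_twelve] at hkey
  have hE1' := E1
  have hE3' := E3
  have hinv : Real.log (2 - Real.sqrt 3) = - Real.log (2 + Real.sqrt 3) := by
    have h1 : (2 - Real.sqrt 3) = (2 + Real.sqrt 3)⁻¹ :=
      eq_inv_of_mul_eq_one_left (by linear_combination (-1:ℝ) * h3)
    rw [h1, Real.log_inv]
  rw [hgoal1, hS, hI]
  rw [hE3', hinv] at hkey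
  linarith [hkey, hE1']
end

section
/- For each odd positive integer n and each j with 1 ≤ j ≤ n, the real number tan((2j-1)π/(8n+4)) is an algebraic unit, i.e., it is an algebraic integer whose multiplicative inverse is also an algebraic integer. -/
open Real

theorem stmt17 (n : ℕ) (hn : Odd n) (hpos : 0 < n) (j : ℕ) (hj1 : 1 ≤ j) (hjn : j ≤ n) :
    IsIntegral ℤ (Real.tan ((2 * j - 1) * π / (8 * n + 4))) ∧
    IsIntegral ℤ (Real.tan ((2 * j - 1) * π / (8 * n + 4)))⁻¹ := by
  have hπ := Real.pi_pos
  set θ : ℝ := (2 * j - 1) * π / (8 * n + 4) with hθdef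
  have hjr1 : (1:ℝ) ≤ (j:ℝ) := by exact_mod_cast hj1
  have hjrn : (j:ℝ) ≤ (n:ℝ) := by exact_mod_cast hjn
  -- θ ∈ (0, π/2)
  have hθ0 : 0 < θ := by
    apply div_pos (by nlinarith) (by positivity)
  have hθ2 : θ < π / 2 := by
    rw [hθdef, div_lt_div_iff₀ (by positivity) two_pos]
    nlinarith
  have hθmul : ((8:ℝ) * n + 4) * θ = (2 * j - 1) * π := by
    rw [hθdef]
    field_simp
  clear hθdef
  clear_value θ
  have hcos : 0 < Real.cos θ := Real.cos_pos_of_mem_Ioo ⟨by linarith, hθ2⟩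
  have hsin2 : 0 < Real.sin (2 * θ) :=
    Real.sin_pos_of_pos_of_lt_pi (by linarith) (by linarith)
  have htanpos : 0 < Real.tan θ := Real.tan_pos_of_pos_of_lt_pi_div_two hθ0 hθ2
  -- complex exponentials
  set E : ℂ := Complex.exp (θ * Complex.I) with hEdef
  have hE0 : E ≠ 0 := Complex.exp_ne_zero _
  set ζ : ℂ := E ^ 2 with hζdef
  have hζE : ζ = Complex.exp ((2 * θ : ℝ) * Complex.I) := by
    rw [hζdef, hEdef, sq, ← Complex.exp_add]
    congr 1
    push_cast
    ring
  have hζIm : ζ.im = Real.sin (2 * θ) := by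
    rw [hζE, Complex.exp_ofReal_mul_I_im]
  have hcosC : Complex.cos θ ≠ 0 := by
    rw [← Complex.ofReal_cos]
    exact_mod_cast hcos.ne'
  have hcosE : Complex.cos θ = (E ^ 2 + 1) / (2 * E) := by
    rw [Complex.cos, hEdef, show -(θ:ℂ) * Complex.I = -((θ:ℂ) * Complex.I) by ring,
      Complex.exp_neg]
    field_simp [Complex.exp_ne_zero]
  have hsinE : Complex.sin θ = (E ^ 2 - 1) / (2 * E * Complex.I) := by
    have h2EI : 2 * E * Complex.I ≠ 0 := by
      simp [hE0, Complex.I_ne_zero]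
    rw [Complex.sin, show -(θ:ℂ) * Complex.I = -((θ:ℂ) * Complex.I) by ring,
      Complex.exp_neg, eq_div_iff h2EI, ← hEdef]
    field_simp
    linear_combination (1 - E ^ 2) * Complex.I_sq
  have h1ζ : (1 : ℂ) + ζ ≠ 0 := by
    intro h
    have hz : ζ = -1 := by linear_combination h
    have h2 : ζ.im = 0 := by rw [hz]; simp
    rw [hζIm] at h2
    exact hsin2.ne' h2
  have h1ζ' : (1 : ℂ) - ζ ≠ 0 := by
    intro h
    have hz : ζ = 1 := by linear_combination -h
    have h2 : ζ.im = 0 := by rw [hz]; rfl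
    rw [hζIm] at h2
    exact hsin2.ne' h2
  -- the key identity: tan θ * (1 + ζ) = I * (1 - ζ)
  have hA : (Real.tan θ : ℂ) * (1 + ζ) = Complex.I * (1 - ζ) := by
    have hE21 : E ^ 2 + 1 ≠ 0 := fun hc => h1ζ (by rw [hζdef]; linear_combination hc)
    rw [Complex.ofReal_tan, Complex.tan_eq_sin_div_cos, hsinE, hcosE, hζdef]
    field_simp [Complex.I_ne_zero]
    linear_combination (-1 + E ^ 4) * Complex.I_sq
  -- ζ ^ (4n+2) = -1
  have hζpow : ζ ^ (4 * n + 2) = -1 := by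
    rw [hζdef, hEdef, ← pow_mul, ← Complex.exp_nat_mul]
    have hcast : ((2 * j - 1 : ℕ) : ℂ) = 2 * (j:ℂ) - 1 := by
      push_cast [Nat.cast_sub (by omega : 1 ≤ 2 * j)]
      ring
    have hθC : (8 * (n:ℂ) + 4) * (θ:ℂ) = (2 * (j:ℂ) - 1) * (π:ℂ) := by
      have := congrArg (Complex.ofReal) hθmul
      push_cast at this
      exact this
    have : ((2 * (4 * n + 2) : ℕ) : ℂ) * ((θ:ℂ) * Complex.I) = ((2 * j - 1 : ℕ) : ℂ) * ((π:ℂ) * Complex.I) := by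
      rw [hcast]
      push_cast
      linear_combination Complex.I * hθC
    rw [this, Complex.exp_nat_mul, Complex.exp_pi_mul_I]
    exact Odd.neg_one_pow ⟨j - 1, by omega⟩
  have hζpow' : ζ ^ (4 * n + 3) = -ζ := by
    rw [show 4 * n + 3 = (4 * n + 2) + 1 by ring, pow_succ, hζpow]
    ring
  -- geometric sums
  set S₁ : ℂ := ∑ l ∈ Finset.range (4 * n + 3), (-ζ) ^ l with hS₁
  set S₂ : ℂ := ∑ l ∈ Finset.range (4 * n + 3), ζ ^ l with hS₂
  have hS₁mul : S₁ * (1 + ζ) = 1 - ζ := by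
    have h2 := geom_sum_mul (-ζ) (4 * n + 3)
    rw [Odd.neg_pow ⟨2 * n + 1, by ring⟩, hζpow'] at h2
    linear_combination -h2
  have hS₂mul : S₂ * (1 - ζ) = 1 + ζ := by
    have h2 := geom_sum_mul ζ (4 * n + 3)
    rw [hζpow'] at h2
    linear_combination -h2
  -- tan θ = I * S₁
  have hT : (Real.tan θ : ℂ) = Complex.I * S₁ := by
    apply mul_right_cancel₀ h1ζ
    rw [hA, mul_assoc, hS₁mul]
  -- (tan θ)⁻¹ = -I * S₂
  have hTinv : ((Real.tan θ : ℂ))⁻¹ = -Complex.I * S₂ := by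
    apply inv_eq_of_mul_eq_one_right
    apply mul_left_cancel₀ h1ζ'
    linear_combination (-Complex.I) * hA + (-(Real.tan θ : ℂ) * Complex.I) * hS₂mul +
      (-(1 - ζ)) * Complex.I_sq
  -- integrality of ζ and I
  have hζint : ζ ∈ integralClosure ℤ ℂ := by
    refine ⟨Polynomial.X ^ (8 * n + 4) - Polynomial.C 1, Polynomial.monic_X_pow_sub_C 1 (by omega), ?_⟩
    have : ζ ^ (8 * n + 4) = 1 := by
      rw [show 8 * n + 4 = (4 * n + 2) * 2 by ring, pow_mul, hζpow]
      norm_num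
    simp [this]
  have hIint : Complex.I ∈ integralClosure ℤ ℂ := by
    refine ⟨Polynomial.X ^ 2 + Polynomial.C 1, Polynomial.monic_X_pow_add_C 1 (by omega), ?_⟩
    simp [Complex.I_sq]
  have key : ∀ x : ℝ, IsIntegral ℤ (x : ℂ) → IsIntegral ℤ x := by
    intro x hx
    have hinj : Function.Injective (algebraMap ℝ ℂ) := RingHom.injective _
    apply (isIntegral_algebraMap_iff hinj).mp
    simpa using hx
  constructor
  · apply key
    rw [hT]
    exact mul_mem hIint (Subalgebra.sum_mem _ fun l _ => pow_mem (neg_mem hζint) l)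
  · apply key
    rw [Complex.ofReal_inv, hTinv]
    exact mul_mem (neg_mem hIint) (Subalgebra.sum_mem _ fun l _ => pow_mem hζint l)
end

section
/- The denesting identity tan(π/20)/tan³(3π/20) = (10 + √(50-22√5))/(10 - √(50-22√5)) holds. -/
open Real

set_option maxHeartbeats 1000000

private lemma tan_pi_div_four_sub (y : ℝ) (hc : Real.cos y > 0) (hcs : Real.cos y + Real.sin y > 0) :
    Real.tan (π / 4 - y) = (1 - Real.tan y) / (1 + Real.tan y) := by
  have e1 : Real.sin (π / 4 - y) = Real.sqrt 2 / 2 * (Real.cos y - Real.sin y) := by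
    rw [Real.sin_sub, Real.sin_pi_div_four, Real.cos_pi_div_four]; ring
  have e2 : Real.cos (π / 4 - y) = Real.sqrt 2 / 2 * (Real.cos y + Real.sin y) := by
    rw [Real.cos_sub, Real.sin_pi_div_four, Real.cos_pi_div_four]; ring
  rw [Real.tan_eq_sin_div_cos, e1, e2, Real.tan_eq_sin_div_cos]
  have hc' : Real.cos y ≠ 0 := ne_of_gt hc
  have hD : Real.sqrt 2 / 2 * (Real.cos y + Real.sin y) ≠ 0 := by positivity
  have h1 : (1 : ℝ) + Real.sin y / Real.cos y ≠ 0 := by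
    have : (1 : ℝ) + Real.sin y / Real.cos y = (Real.cos y + Real.sin y) / Real.cos y := by
      field_simp
    rw [this]; positivity
  rw [div_eq_div_iff hD h1]
  field_simp

theorem stmt18 :
    Real.tan (π / 20) / (Real.tan (3 * π / 20)) ^ 3 =
      (10 + Real.sqrt (50 - 22 * Real.sqrt 5)) /
        (10 - Real.sqrt (50 - 22 * Real.sqrt 5)) := by
  have hpi := Real.pi_pos
  set b := Real.tan (π / 10) with hb
  have hcos10 : Real.cos (π / 10) > 0 := by
    apply Real.cos_pos_of_mem_Ioo
    constructor <;> nlinarith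
  have hsin10 : Real.sin (π / 10) > 0 := by
    apply Real.sin_pos_of_pos_of_lt_pi <;> nlinarith
  have hbpos : b > 0 := by
    rw [hb, Real.tan_eq_sin_div_cos]; positivity
  have h5 : Real.sqrt 5 ^ 2 = 5 := Real.sq_sqrt (by norm_num)
  have h5pos : Real.sqrt 5 > 0 := Real.sqrt_pos.mpr (by norm_num)
  have hcos5 : Real.cos (π / 5) = (1 + Real.sqrt 5) / 4 := Real.cos_pi_div_five
  have hdouble : Real.cos (π / 5) = 2 * Real.cos (π / 10) ^ 2 - 1 := by
    have e : π / 5 = 2 * (π / 10) := by ring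
    rw [e, Real.cos_two_mul]
  have hcos10sq : Real.cos (π / 10) ^ 2 = (5 + Real.sqrt 5) / 8 := by
    nlinarith [hdouble, hcos5]
  have hsin10sq : Real.sin (π / 10) ^ 2 = (3 - Real.sqrt 5) / 8 := by
    have := Real.sin_sq_add_cos_sq (π / 10)
    nlinarith
  have hb2 : b ^ 2 = (5 - 2 * Real.sqrt 5) / 5 := by
    rw [hb, Real.tan_eq_sin_div_cos, div_pow, hsin10sq, hcos10sq]
    rw [div_eq_div_iff (by positivity) (by norm_num)]
    nlinarith
  have hblt : b < 1 := by nlinarith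
  have hq : 5 * b ^ 4 - 10 * b ^ 2 + 1 = 0 := by nlinarith [hb2, h5]
  have hr : Real.sqrt 5 = (5 - 5 * b ^ 2) / 2 := by nlinarith [hb2]
  have h3 : Real.tan (3 * π / 20) = (1 - b) / (1 + b) := by
    have e : 3 * π / 20 = π / 4 - π / 10 := by ring
    rw [e, tan_pi_div_four_sub _ hcos10 (by linarith)]
  have ht5 : Real.tan (π / 5) = 2 * b / (1 - b ^ 2) := by
    have e : π / 5 = 2 * (π / 10) := by ring
    rw [e, Real.tan_two_mul]
  have hcos5' : Real.cos (π / 5) > 0 := by rw [hcos5]; positivity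
  have hsin5' : Real.sin (π / 5) > 0 := by
    apply Real.sin_pos_of_pos_of_lt_pi <;> nlinarith
  have h1 : Real.tan (π / 20) = (1 - b ^ 2 - 2 * b) / (1 - b ^ 2 + 2 * b) := by
    have e : π / 20 = π / 4 - π / 5 := by ring
    rw [e, tan_pi_div_four_sub _ hcos5' (by linarith), ht5]
    have hb2pos : (1 : ℝ) - b ^ 2 > 0 := by nlinarith
    rw [div_eq_div_iff]
    · field_simp
    · have : (1 : ℝ) + 2 * b / (1 - b ^ 2) = (1 - b ^ 2 + 2 * b) / (1 - b ^ 2) := by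
        field_simp
      rw [this]; positivity
    · positivity
  have hs : Real.sqrt (50 - 22 * Real.sqrt 5) = (5 - Real.sqrt 5) * b := by
    have key : 50 - 22 * Real.sqrt 5 = ((5 - Real.sqrt 5) * b) ^ 2 := by
      have e : ((5 - Real.sqrt 5) * b) ^ 2 = (5 - Real.sqrt 5) ^ 2 * b ^ 2 := by ring
      rw [e, hb2]
      nlinarith [h5]
    rw [key, Real.sqrt_sq (by nlinarith)]
  rw [h1, h3, hs, hr]
  have d1 : (1 : ℝ) - b ^ 2 + 2 * b > 0 := by nlinarith
  have d2 : (1 : ℝ) + b > 0 := by linarith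
  have d2' : (1 : ℝ) - b > 0 := by linarith
  have d3 : (10 : ℝ) - (5 - (5 - 5 * b ^ 2) / 2) * b > 0 := by nlinarith
  rw [div_pow, div_div_div_eq, div_eq_div_iff (by positivity) (by positivity)]
  ring_nf
  linear_combination (5 / 2 * (6 * b + 2 * b ^ 3)) * hq
end

section
/- Catalan's constant satisfies G = (1/2)·∑_{k=0}^∞ 4^k / ((2k+1)^2·C(2k,k)). -/
namespace Stmt19Aux

open Real MeasureTheory Set

lemma cb_pos (k : ℕ) : (0 : ℝ) < (Nat.centralBinom k : ℝ) := by
  exact_mod_cast Nat.centralBinom_pos k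

lemma choose_eq (k : ℕ) : ((2 * k).choose k : ℝ) = (Nat.centralBinom k : ℝ) := rfl

lemma hrec (k : ℕ) :
    ((k : ℝ) + 1) * (Nat.centralBinom (k + 1) : ℝ)
      = 2 * (2 * k + 1) * (Nat.centralBinom k : ℝ) := by
  exact_mod_cast Nat.succ_mul_centralBinom_succ k

lemma wallis (k : ℕ) :
    ∫ θ in (0:ℝ)..π, sin θ ^ (2 * k + 1)
      = 2 * ((4:ℝ) ^ k / ((2 * k + 1) * (Nat.centralBinom k : ℝ))) := by
  rw [integral_sin_pow_odd]
  congr 1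
  induction k with
  | zero => simp
  | succ n ih =>
    rw [Finset.prod_range_succ, ih]
    have h1 := hrec n
    have h2 := (cb_pos n).ne'
    have h3 := (cb_pos (n + 1)).ne'
    have h4 : (2 * (n:ℝ) + 1) ≠ 0 := by positivity
    have h5 : (2 * (n:ℝ) + 3) ≠ 0 := by positivity
    have h6 : ((n:ℝ) + 1) ≠ 0 := by positivity
    have hC1 : (Nat.centralBinom (n + 1) : ℝ)
        = 2 * (2 * n + 1) * (Nat.centralBinom n : ℝ) / ((n:ℝ) + 1) :=
      (eq_div_iff h6).2 (by linarith [h1])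
    push_cast
    rw [hC1]
    field_simp
    ring


noncomputable def r (k : ℕ) : ℝ :=
  (4 : ℝ) ^ k / ((2 * k + 1) ^ 2 * ((2 * k).choose k : ℝ))

lemma r_nonneg (k : ℕ) : 0 ≤ r k := by
  unfold r; positivity

lemma sixteen_le (k : ℕ) (hk : 1 ≤ k) :
    (16 : ℝ) ^ k ≤ 4 * k * (Nat.centralBinom k : ℝ) ^ 2 := by
  induction k, hk using Nat.le_induction with
  | base => norm_num [Nat.centralBinom]
  | succ n hn ih =>
    have hsq : ((n : ℝ) + 1) ^ 2 * (Nat.centralBinom (n + 1) : ℝ) ^ 2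
        = 4 * (2 * n + 1) ^ 2 * (Nat.centralBinom n : ℝ) ^ 2 := by
      have h := hrec n
      linear_combination (((n:ℝ) + 1) * (Nat.centralBinom (n + 1) : ℝ)
        + 2 * (2 * (n:ℝ) + 1) * (Nat.centralBinom n : ℝ)) * h
    have hpos : (0 : ℝ) < ((n : ℝ) + 1) ^ 2 := by positivity
    rw [← mul_le_mul_iff_of_pos_right hpos]
    have hCn := (cb_pos n).le
    have h1 : (1:ℝ) ≤ (n:ℝ) := by exact_mod_cast hn
    calc (16:ℝ) ^ (n + 1) * ((n:ℝ)+1)^2 = 16 * ((n:ℝ)+1)^2 * 16 ^ n := by ring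
      _ ≤ 16 * ((n:ℝ)+1)^2 * (4 * n * (Nat.centralBinom n : ℝ) ^ 2) := by
          gcongr
      _ ≤ (4 * ((n:ℝ)+1)) * (4 * (2 * n + 1) ^ 2 * (Nat.centralBinom n : ℝ) ^ 2) := by
          nlinarith [sq_nonneg ((Nat.centralBinom n : ℝ)), h1]
      _ = 4 * ((n:ℝ)+1) * (((n : ℝ) + 1) ^ 2 * (Nat.centralBinom (n + 1) : ℝ) ^ 2) := by
          rw [hsq]
      _ = 4 * ((n:ℝ)+1) * (Nat.centralBinom (n + 1) : ℝ) ^ 2 * ((n:ℝ)+1)^2 := by ring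
      _ = 4 * (↑(n+1)) * (Nat.centralBinom (n + 1) : ℝ) ^ 2 * ((n:ℝ)+1)^2 := by push_cast; ring

lemma four_pow_le (k : ℕ) (hk : 1 ≤ k) :
    (4 : ℝ) ^ k ≤ 2 * Real.sqrt k * (Nat.centralBinom k : ℝ) := by
  have h := sixteen_le k hk
  have h0 : (0:ℝ) ≤ 4 * k * (Nat.centralBinom k : ℝ) ^ 2 := by positivity
  have := Real.sqrt_le_sqrt h
  rwa [show (16:ℝ)^k = ((4:ℝ)^k)^2 by rw [← pow_mul, mul_comm, pow_mul]; norm_num,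
    Real.sqrt_sq (by positivity),
    show 4 * (k:ℝ) * (Nat.centralBinom k : ℝ) ^ 2
        = (2 * Real.sqrt k * (Nat.centralBinom k : ℝ))^2 by
      have := Real.mul_self_sqrt (by positivity : (0:ℝ) ≤ (k:ℝ)); nlinarith [this],
    Real.sqrt_sq (by positivity)] at this

lemma r_le (k : ℕ) (hk : 1 ≤ k) : r k ≤ (((k : ℝ)) ^ ((3:ℝ)/2))⁻¹ := by
  have hk0 : (0:ℝ) < k := by exact_mod_cast hk
  have h1 : (1:ℝ) ≤ (k:ℝ) := by exact_mod_cast hk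
  have hsq : Real.sqrt k * Real.sqrt k = k := Real.mul_self_sqrt hk0.le
  have hsqpos : 0 < Real.sqrt k := Real.sqrt_pos.2 hk0
  have hrp : ((k:ℝ)) ^ ((3:ℝ)/2) = (k:ℝ) * Real.sqrt k := by
    rw [Real.sqrt_eq_rpow, show (3:ℝ)/2 = 1 + 1/2 by norm_num, Real.rpow_add hk0,
      Real.rpow_one]
  have step1 : r k ≤ 2 * Real.sqrt k / (2 * (k:ℝ) + 1) ^ 2 := by
    have : r k ≤ (2 * Real.sqrt k * (Nat.centralBinom k : ℝ)) / ((2 * (k:ℝ) + 1) ^ 2 * (Nat.centralBinom k : ℝ)) := by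
      unfold r
      rw [show ((2 * k).choose k : ℝ) = (Nat.centralBinom k : ℝ) from rfl]
      gcongr
      exact four_pow_le k hk
    rwa [mul_div_mul_right _ _ (cb_pos k).ne'] at this
  refine step1.trans ?_
  rw [hrp]
  rw [inv_eq_one_div, div_le_div_iff₀ (by positivity) (by positivity)]
  nlinarith [hsq, hsqpos, h1]

lemma summable_r : Summable r := by
  rw [← summable_nat_add_iff 1]
  have hb : Summable (fun k : ℕ => (((k + 1 : ℕ) : ℝ) ^ ((3:ℝ)/2))⁻¹) :=
    (summable_nat_add_iff (f := fun n : ℕ => (((n : ℕ) : ℝ) ^ ((3:ℝ)/2))⁻¹) 1).2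
      (Real.summable_nat_rpow_inv.2 (by norm_num))
  refine Summable.of_nonneg_of_le (fun k => r_nonneg _) (fun k => ?_) hb
  exact r_le (k + 1) (by omega)


lemma inner_integral {x : ℝ} (hx0 : 0 < x) (hx1 : x < 1) :
    ∫ θ in (0:ℝ)..π, 1/2 * sin θ / (1 - x^2 * sin θ^2)
      = arctan (x / Real.sqrt (1 - x^2)) / (x * Real.sqrt (1 - x^2)) := by
  have hx2 : 0 < 1 - x^2 := by nlinarith
  set c := Real.sqrt (1 - x^2) with hc
  have hcpos : 0 < c := Real.sqrt_pos.2 hx2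
  have hc2 : c^2 = 1 - x^2 := Real.sq_sqrt hx2.le
  set A : ℝ → ℝ := fun θ => -arctan (x * Real.cos θ / c) / (2 * x * c) with hA
  have hder : ∀ θ ∈ uIcc (0:ℝ) π,
      HasDerivAt A (1/2 * sin θ / (1 - x^2 * sin θ^2)) θ := by
    intro θ _
    have h1 : HasDerivAt (fun t : ℝ => x * Real.cos t / c) (-(x * sin θ)/c) θ := by
      simpa [mul_comm, mul_div_assoc] using
        (((Real.hasDerivAt_cos θ).const_mul x).div_const c)
    have h2 := (h1.arctan.div_const (2 * x * c)).neg
    have hD : 0 < 1 - x^2 * sin θ^2 := by nlinarith [sin_sq_le_one θ, sq_nonneg (sin θ)]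
    convert h2 using 1
    case e'_4 => rfl
    case e'_5 => rfl
    case e'_8 => funext t; simp [hA, neg_div]
    case e'_9 =>
      have hcos : Real.cos θ^2 = 1 - sin θ^2 := Real.cos_sq' θ
      have hkey : 1 + (x * Real.cos θ / c) ^ 2 = (1 - x^2 * sin θ^2) / c^2 := by
        field_simp
        linear_combination hc2 + x^2 * hcos
      rw [hkey]
      have hDne : (1 - x^2 * sin θ^2) ≠ 0 := hD.ne'
      field_simp
  have hcont : Continuous fun θ : ℝ => 1/2 * sin θ / (1 - x^2 * sin θ^2) := by
    apply Continuous.div (by fun_prop) (by fun_prop)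
    intro θ
    nlinarith [sin_sq_le_one θ]
  rw [intervalIntegral.integral_eq_sub_of_hasDerivAt hder (hcont.intervalIntegrable 0 π)]
  simp only [hA, Real.cos_pi, Real.cos_zero]
  rw [show x * (-1) / c = -(x/c) by ring, Real.arctan_neg]
  field_simp
  ring



lemma ratio_le_one (k : ℕ) :
    (4:ℝ)^k / ((2 * (k:ℝ) + 1) * (Nat.centralBinom k : ℝ)) ≤ 1 := by
  have hcb := cb_pos k
  rw [div_le_one (by positivity)]
  rcases Nat.eq_zero_or_pos k with hk | hk
  · subst hk; norm_num [Nat.centralBinom]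
  · have h := Nat.four_pow_le_two_mul_self_mul_centralBinom k hk
    have h' : (4:ℝ)^k ≤ 2 * k * (Nat.centralBinom k : ℝ) := by exact_mod_cast h
    nlinarith [cb_pos k]

lemma tsum_h {x : ℝ} (hx0 : 0 < x) (hx1 : x < 1) :
    ∑' k : ℕ, x^(2*k) * ((4:ℝ)^k / ((2 * (k:ℝ) + 1) * (Nat.centralBinom k : ℝ)))
      = arctan (x / Real.sqrt (1-x^2)) / (x * Real.sqrt (1-x^2)) := by
  set F : ℕ → ℝ → ℝ := fun k θ => 1/2 * (x * sin θ)^(2*k) * sin θ with hF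
  have hFcont : ∀ k, Continuous (F k) := by intro k; fun_prop
  have hFint : ∀ k, IntegrableOn (F k) (Ioo 0 π) := fun k =>
    ((hFcont k).integrableOn_Icc).mono_set Ioo_subset_Icc_self
  have hval : ∀ k, ∫ θ in Ioo (0:ℝ) π, F k θ
      = x^(2*k) * ((4:ℝ)^k / ((2 * (k:ℝ) + 1) * (Nat.centralBinom k : ℝ))) := by
    intro k
    rw [← integral_Ioc_eq_integral_Ioo, ← intervalIntegral.integral_of_le Real.pi_pos.le]
    have heq : ∀ θ : ℝ, F k θ = (1/2 * x^(2*k)) * sin θ^(2*k+1) := by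
      intro θ; simp only [hF, mul_pow, pow_succ]; ring
    rw [intervalIntegral.integral_congr (fun θ _ => heq θ),
      intervalIntegral.integral_const_mul, wallis k]
    push_cast
    ring
  have hnorm : ∀ k, ∫ θ in Ioo (0:ℝ) π, ‖F k θ‖
      = x^(2*k) * ((4:ℝ)^k / ((2 * (k:ℝ) + 1) * (Nat.centralBinom k : ℝ))) := by
    intro k
    rw [← hval k]
    apply setIntegral_congr_fun measurableSet_Ioo
    intro θ hθ
    have hs := Real.sin_pos_of_pos_of_lt_pi hθ.1 hθ.2
    have h0 : 0 ≤ F k θ := by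
      have : 0 < x * sin θ := by positivity
      simp only [hF]; positivity
    exact Real.norm_of_nonneg h0
  have hsum : Summable (fun k : ℕ => x^(2*k) * ((4:ℝ)^k / ((2 * (k:ℝ) + 1) * (Nat.centralBinom k : ℝ)))) := by
    apply Summable.of_nonneg_of_le (fun k => by positivity) (fun k => ?_)
      (summable_geometric_of_lt_one (by positivity) (by nlinarith : x^2 < 1))
    calc x^(2*k) * ((4:ℝ)^k / ((2 * (k:ℝ) + 1) * (Nat.centralBinom k : ℝ)))
        ≤ x^(2*k) * 1 := by
          apply mul_le_mul_of_nonneg_left (ratio_le_one k) (by positivity)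
      _ = (x^2)^k := by rw [mul_one, ← pow_mul]
  have hkey := MeasureTheory.integral_tsum_of_summable_integral_norm
    (μ := volume.restrict (Ioo 0 π)) (F := F) hFint (by simpa only [hnorm] using hsum)
  simp only [hval] at hkey
  rw [hkey]
  have hpt : ∀ θ ∈ Ioo (0:ℝ) π, (∑' k, F k θ) = 1/2 * sin θ / (1 - x^2 * sin θ^2) := by
    intro θ hθ
    have hs := Real.sin_pos_of_pos_of_lt_pi hθ.1 hθ.2
    have hs1 := Real.sin_le_one θ
    have hq : (x * sin θ)^2 < 1 := by
      have h2 : x * sin θ < 1 := by nlinarith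
      exact pow_lt_one₀ (by positivity) h2 (by norm_num)
    have hgeo := (hasSum_geometric_of_lt_one (by positivity) hq).mul_left (1/2 * sin θ)
    calc (∑' k, F k θ) = ∑' k, (1/2 * sin θ) * ((x * sin θ)^2)^k := by
          congr 1; funext k; rw [← pow_mul]; simp only [hF]; ring
      _ = (1/2 * sin θ) * (1 - (x * sin θ)^2)⁻¹ := hgeo.tsum_eq
      _ = 1/2 * sin θ / (1 - x^2 * sin θ^2) := by rw [mul_pow]; ring
  rw [setIntegral_congr_fun measurableSet_Ioo hpt,
    ← integral_Ioc_eq_integral_Ioo, ← intervalIntegral.integral_of_le Real.pi_pos.le]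
  exact inner_integral hx0 hx1


lemma tsum_r_eq :
    ∑' k, r k
      = ∫ x in Ioo (0:ℝ) 1, arctan (x / Real.sqrt (1-x^2)) / (x * Real.sqrt (1-x^2)) := by
  set G : ℕ → ℝ → ℝ :=
    fun k x => x^(2*k) * ((4:ℝ)^k / ((2 * (k:ℝ) + 1) * (Nat.centralBinom k : ℝ))) with hG
  have hGcont : ∀ k, Continuous (G k) := by intro k; fun_prop
  have hGint : ∀ k, IntegrableOn (G k) (Ioo 0 1) := fun k =>
    ((hGcont k).integrableOn_Icc).mono_set Ioo_subset_Icc_self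
  have hval : ∀ k, ∫ x in Ioo (0:ℝ) 1, G k x = r k := by
    intro k
    rw [← integral_Ioc_eq_integral_Ioo, ← intervalIntegral.integral_of_le zero_le_one]
    simp only [hG]
    rw [intervalIntegral.integral_mul_const, integral_pow]
    have hcb := cb_pos k
    have h1 : (2 * (k:ℝ) + 1) ≠ 0 := by positivity
    unfold r
    rw [show ((2 * k).choose k : ℝ) = (Nat.centralBinom k : ℝ) from rfl]
    push_cast
    field_simp
    ring
  have hnorm : ∀ k, ∫ x in Ioo (0:ℝ) 1, ‖G k x‖ = r k := by
    intro k
    rw [← hval k]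
    apply setIntegral_congr_fun measurableSet_Ioo
    intro x hx
    have h0 : 0 ≤ G k x := by
      have hcb := cb_pos k
      have hx0 := hx.1
      simp only [hG]; positivity
    exact Real.norm_of_nonneg h0
  have hkey := MeasureTheory.integral_tsum_of_summable_integral_norm
    (μ := volume.restrict (Ioo 0 1)) (F := G) hGint (by simpa only [hnorm] using summable_r)
  simp only [hval] at hkey
  rw [hkey]
  apply setIntegral_congr_fun measurableSet_Ioo
  intro x hx
  exact tsum_h hx.1 hx.2

lemma cov :
    ∫ x in Ioo (0:ℝ) 1, arctan (x / Real.sqrt (1-x^2)) / (x * Real.sqrt (1-x^2))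
      = ∫ u in Ioo (0:ℝ) 1, 2 * (arctan u / u) := by
  set g : ℝ → ℝ := fun u => 2 * u / (1 + u^2) with hg
  set g' : ℝ → ℝ := fun u => 2 * (1 - u^2) / (1 + u^2)^2 with hg'
  have hgc : Continuous g := by
    apply Continuous.div (by fun_prop) (by fun_prop)
    intro u; positivity
  have himg : g '' (Ioo 0 1) = Ioo 0 1 := by
    apply Subset.antisymm
    · rintro y ⟨u, hu, rfl⟩
      refine ⟨by simp only [hg]; exact div_pos (by linarith [hu.1]) (by positivity), ?_⟩
      simp only [hg]
      rw [div_lt_one (by positivity)]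
      nlinarith [hu.1, hu.2, sq_nonneg (1 - u)]
    · have h := intermediate_value_Ioo (zero_le_one) hgc.continuousOn (a := (0:ℝ)) (b := 1)
      simp only [hg] at h
      norm_num at h
      exact h
  have hder : ∀ u ∈ Ioo (0:ℝ) 1, HasDerivWithinAt g (g' u) (Ioo 0 1) u := by
    intro u hu
    have h1 : HasDerivAt (fun u : ℝ => 2 * u) 2 u := by
      simpa using (hasDerivAt_id u).const_mul 2
    have h2 : HasDerivAt (fun u : ℝ => 1 + u^2) (2 * u) u := by
      simpa using (hasDerivAt_pow 2 u).const_add 1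
    have h3 := h1.div h2 (by positivity)
    refine (HasDerivAt.hasDerivWithinAt ?_)
    convert h3 using 1
    case e'_4 => rfl
    case e'_8 => rfl
    simp only [hg']
    field_simp
    ring
  have hinj : InjOn g (Ioo 0 1) := by
    intro a ha b hb hab
    simp only [hg] at hab
    have ha2 : (1:ℝ) + a^2 ≠ 0 := by positivity
    have hb2 : (1:ℝ) + b^2 ≠ 0 := by positivity
    rw [div_eq_div_iff ha2 hb2] at hab
    have h2 : (a - b) * (1 - a * b) = 0 := by linear_combination (1/2) * hab
    rcases mul_eq_zero.1 h2 with h | h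
    · linarith [sub_eq_zero.1 h]
    · nlinarith [ha.1, ha.2, hb.1, hb.2]
  have hcov := MeasureTheory.integral_image_eq_integral_abs_deriv_smul
    measurableSet_Ioo hder hinj
    (fun x => arctan (x / Real.sqrt (1-x^2)) / (x * Real.sqrt (1-x^2)))
  rw [himg] at hcov
  rw [hcov]
  apply setIntegral_congr_fun measurableSet_Ioo
  intro u hu
  have hu0 := hu.1
  have hu1 := hu.2
  have h1u : (0:ℝ) < 1 - u^2 := by nlinarith
  have h1p : (0:ℝ) < 1 + u^2 := by positivity
  have hs1 : 1 - (g u)^2 = ((1 - u^2) / (1 + u^2))^2 := by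
    simp only [hg]; field_simp; ring
  have hsqrt : Real.sqrt (1 - (g u)^2) = (1 - u^2) / (1 + u^2) := by
    rw [hs1, Real.sqrt_sq (by positivity)]
  have harg : g u / Real.sqrt (1 - (g u)^2) = 2 * u / (1 - u^2) := by
    rw [hsqrt]; simp only [hg]; field_simp
  have harctan : arctan (2 * u / (1 - u^2)) = 2 * arctan u := by
    have h := Real.arctan_add (x := u) (y := u) (by nlinarith)
    rw [show u + u = 2 * u by ring, show 1 - u * u = 1 - u^2 by ring] at h
    rw [← h]; ring
  have habs : |g' u| = 2 * (1 - u^2) / (1 + u^2)^2 := by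
    simp only [hg']
    rw [abs_of_pos (by positivity)]
  show |g' u| • (arctan (g u / Real.sqrt (1 - (g u)^2)) / (g u * Real.sqrt (1 - (g u)^2)))
      = 2 * (arctan u / u)
  rw [smul_eq_mul, habs, harg, harctan, hsqrt]
  simp only [hg]
  rw [show (2:ℝ) * u / (1 + u^2) * ((1 - u^2) / (1 + u^2))
      = (2 * u * (1 - u^2)) / ((1 + u^2)^2) by field_simp]
  rw [div_div_eq_mul_div, div_mul_eq_mul_div]
  field_simp

lemma lhs_eq :
    ∑' k : ℕ, (-1:ℝ)^k / (2 * k + 1)^2 = ∫ u in Ioo (0:ℝ) 1, arctan u / u := by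
  set f : ℕ → ℝ → ℝ := fun k u => ((-1:ℝ)^k / (2 * (k:ℝ) + 1)) * u^(2*k) with hf
  have hfcont : ∀ k, Continuous (f k) := by intro k; fun_prop
  have hfint : ∀ k, IntegrableOn (f k) (Ioo 0 1) := fun k =>
    ((hfcont k).integrableOn_Icc).mono_set Ioo_subset_Icc_self
  have hval : ∀ k, ∫ u in Ioo (0:ℝ) 1, f k u = (-1:ℝ)^k / (2 * (k:ℝ) + 1)^2 := by
    intro k
    rw [← integral_Ioc_eq_integral_Ioo, ← intervalIntegral.integral_of_le zero_le_one]
    simp only [hf]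
    rw [intervalIntegral.integral_const_mul, integral_pow]
    have h1 : (2 * (k:ℝ) + 1) ≠ 0 := by positivity
    push_cast
    field_simp
    ring
  have hnorm : ∀ k, ∫ u in Ioo (0:ℝ) 1, ‖f k u‖ = 1 / (2 * (k:ℝ) + 1)^2 := by
    intro k
    have heq : ∀ u ∈ Ioo (0:ℝ) 1, ‖f k u‖ = (1 / (2 * (k:ℝ) + 1)) * u^(2*k) := by
      intro u hu
      have hu0 := hu.1
      simp only [hf, norm_mul, norm_div, norm_pow, norm_neg, norm_one, one_pow,
        Real.norm_eq_abs]
      rw [abs_of_pos (by positivity : (0:ℝ) < 2 * (k:ℝ) + 1),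
        abs_of_pos (by positivity : (0:ℝ) < u)]
    rw [setIntegral_congr_fun measurableSet_Ioo heq,
      ← integral_Ioc_eq_integral_Ioo, ← intervalIntegral.integral_of_le zero_le_one,
      intervalIntegral.integral_const_mul, integral_pow]
    have h1 : (2 * (k:ℝ) + 1) ≠ 0 := by positivity
    push_cast
    field_simp
    ring
  have hsummable : Summable (fun k : ℕ => 1 / (2 * (k:ℝ) + 1)^2) := by
    have hbase : Summable (fun n : ℕ => 1 / ((n:ℝ))^2) :=
      Real.summable_one_div_nat_pow.2 one_lt_two
    have hshift : Summable (fun n : ℕ => 1 / (((n+1 : ℕ)):ℝ)^2) :=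
      (summable_nat_add_iff (f := fun n : ℕ => 1 / ((n:ℝ))^2) 1).2 hbase
    refine Summable.of_nonneg_of_le (fun k => by positivity) (fun k => ?_) hshift
    gcongr
    · push_cast; linarith [Nat.cast_nonneg (α := ℝ) k]
  have hkey := MeasureTheory.integral_tsum_of_summable_integral_norm
    (μ := volume.restrict (Ioo 0 1)) (F := f) hfint (by simpa only [hnorm] using hsummable)
  simp only [hval] at hkey
  rw [hkey]
  apply setIntegral_congr_fun measurableSet_Ioo
  intro u hu
  have hu0 := hu.1
  have hu1 := hu.2
  have hnu : ‖u‖ < 1 := by rw [Real.norm_eq_abs, abs_lt]; constructor <;> linarith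
  have h := (Real.hasSum_arctan hnu).div_const u
  show (∑' i, f i u) = arctan u / u
  rw [← h.tsum_eq]
  congr 1
  funext k
  simp only [hf]
  have hu0' : u ≠ 0 := ne_of_gt hu0
  field_simp
  push_cast
  ring


end Stmt19Aux

open Real
theorem stmt19 :
    (∑' k : ℕ, (-1 : ℝ) ^ k / (2 * k + 1) ^ 2) =
      (1 / 2) * ∑' k : ℕ,
        (4 : ℝ) ^ k / ((2 * k + 1) ^ 2 * (Nat.choose (2 * k) k : ℝ)) := by
  have hr : (∑' k : ℕ, (4 : ℝ) ^ k / ((2 * k + 1) ^ 2 * (Nat.choose (2 * k) k : ℝ)))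
      = ∑' k, Stmt19Aux.r k := rfl
  rw [hr, Stmt19Aux.tsum_r_eq, Stmt19Aux.cov, Stmt19Aux.lhs_eq]
  rw [MeasureTheory.integral_const_mul]
  ring
end
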